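/- Approximate action-space recursion: under the same setup, with a rounding function round : ℝ → ℝ and threshold κ ∈ ℝ, define ĝ_v(S+1, u) = 0 if u ≥ v else ∞ and ĝ_v(t, u) = min over v_t ∈ 𝒱 of α(β(a_t, c_t(v_t)), ĝ_v(t+1, round(u + a_t v_t))). Then ĝ_v(t, u) equals the minimum over (v_t,…,v_S) ∈ 𝒱^(S−t+1) satisfying σ̂(t, u) ≥ v of the same fold, where σ̂(t, u) is the rounded partial sum defined by σ̂(S+1, u) = u and σ̂(t, u) = σ̂(t+1, round(u + a_t v_t)). -/
import Mathlib


/-- The fold `α(β(a_t, c_t(v_t)), α(β(a_{t+1}, c_{t+1}(v_{t+1})), …, 0))` over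
indices `t, …, t+n-1`. -/
noncomputable def foldCost (α : EReal → EReal → EReal) (β : ℝ → EReal → EReal)
    (a : ℕ → ℝ) (c : ℕ → ℝ → EReal) : ℕ → ℕ → (ℕ → ℝ) → EReal
  | _, 0, _ => 0
  | t, n + 1, w => α (β (a t) (c t (w t))) (foldCost α β a c (t + 1) n w)

/-- Rounded partial sums: `σ̂(S+1, u) = u`, `σ̂(t, u) = σ̂(t+1, round(u + a_t w_t))`. -/
def sigmaHat (rnd : ℝ → ℝ) (a w : ℕ → ℝ) : ℕ → ℕ → ℝ → ℝ
  | _, 0, u => u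
  | t, n + 1, u => sigmaHat rnd a w (t + 1) n (rnd (u + a t * w t))

/-- Approximate action-space dynamic program: `ĝ_v(S+1, u) = 0` if `u ≥ v` else `∞`,
and `ĝ_v(t, u) = min_{v_t ∈ 𝒱} α(β(a_t, c_t(v_t)), ĝ_v(t+1, round(u + a_t v_t)))`. -/
noncomputable def gHat (rnd : ℝ → ℝ) (𝒱 : Finset ℝ) (α : EReal → EReal → EReal)
    (β : ℝ → EReal → EReal) (a : ℕ → ℝ) (c : ℕ → ℝ → EReal) (v : ℝ) :
    ℕ → ℕ → ℝ → EReal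
  | _, 0, u => if v ≤ u then 0 else ⊤
  | t, n + 1, u =>
      ⨅ vt ∈ 𝒱, α (β (a t) (c t vt))
        (gHat rnd 𝒱 α β a c v (t + 1) n (rnd (u + a t * vt)))

lemma sigmaHat_congr (rnd : ℝ → ℝ) (a : ℕ → ℝ) :
    ∀ (n t : ℕ) (u : ℝ) (w w' : ℕ → ℝ),
      (∀ i ∈ Finset.Ico t (t + n), w i = w' i) →
      sigmaHat rnd a w t n u = sigmaHat rnd a w' t n u := by
  intro n
  induction n with
  | zero => intro t u w w' _; rfl
  | succ n ih =>
    intro t u w w' h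
    have ht : w t = w' t := h t (by simp only [Finset.mem_Ico]; omega)
    simp only [sigmaHat, ht]
    exact ih (t + 1) _ w w' fun i hi => h i (by simp [Finset.mem_Ico] at *; omega)

lemma foldCost_congr (α : EReal → EReal → EReal) (β : ℝ → EReal → EReal)
    (a : ℕ → ℝ) (c : ℕ → ℝ → EReal) :
    ∀ (n t : ℕ) (w w' : ℕ → ℝ),
      (∀ i ∈ Finset.Ico t (t + n), w i = w' i) →
      foldCost α β a c t n w = foldCost α β a c t n w' := by
  intro n
  induction n with
  | zero => intro t w w' _; rfl
  | succ n ih =>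
    intro t w w' h
    have ht : w t = w' t := h t (by simp only [Finset.mem_Ico]; omega)
    simp only [foldCost, ht]
    congr 1
    exact ih (t + 1) w w' fun i hi => h i (by simp [Finset.mem_Ico] at *; omega)

lemma gHat_le_foldCost (rnd : ℝ → ℝ) (𝒱 : Finset ℝ)
    (α : EReal → EReal → EReal) (β : ℝ → EReal → EReal)
    (hα₁ : ∀ x, Monotone (α x))
    (a : ℕ → ℝ) (c : ℕ → ℝ → EReal) (v : ℝ) :
    ∀ (n t : ℕ) (u : ℝ) (w : ℕ → ℝ),
      (∀ i ∈ Finset.Ico t (t + n), w i ∈ 𝒱) →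
      v ≤ sigmaHat rnd a w t n u →
      gHat rnd 𝒱 α β a c v t n u ≤ foldCost α β a c t n w := by
  intro n
  induction n with
  | zero =>
    intro t u w _ hv
    simp only [sigmaHat] at hv
    simp [gHat, foldCost, hv]
  | succ n ih =>
    intro t u w hmem hv
    have hwt : w t ∈ 𝒱 := hmem t (by simp only [Finset.mem_Ico]; omega)
    calc gHat rnd 𝒱 α β a c v t (n + 1) u
        ≤ α (β (a t) (c t (w t)))
            (gHat rnd 𝒱 α β a c v (t + 1) n (rnd (u + a t * w t))) := by
          simp only [gHat]
          exact iInf₂_le (w t) hwt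
      _ ≤ α (β (a t) (c t (w t))) (foldCost α β a c (t + 1) n w) := by
          apply hα₁
          exact ih (t + 1) _ w (fun i hi => hmem i (by simp [Finset.mem_Ico] at *; omega))
            (by simpa [sigmaHat] using hv)
      _ = foldCost α β a c t (n + 1) w := rfl

lemma gHat_attained (rnd : ℝ → ℝ) (𝒱 : Finset ℝ) (h𝒱 : 𝒱.Nonempty)
    (α : EReal → EReal → EReal) (β : ℝ → EReal → EReal)
    (hα₁ : ∀ x, Monotone (α x)) (hαTop : ∀ x, α x ⊤ = ⊤)
    (a : ℕ → ℝ) (c : ℕ → ℝ → EReal) (v : ℝ) :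
    ∀ (n t : ℕ) (u : ℝ), gHat rnd 𝒱 α β a c v t n u ≠ ⊤ →
      ∃ w : ℕ → ℝ, (∀ i ∈ Finset.Ico t (t + n), w i ∈ 𝒱) ∧
        v ≤ sigmaHat rnd a w t n u ∧
        foldCost α β a c t n w ≤ gHat rnd 𝒱 α β a c v t n u := by
  intro n
  induction n with
  | zero =>
    intro t u hne
    simp only [gHat] at hne ⊢
    by_cases hv : v ≤ u
    · exact ⟨fun _ => h𝒱.choose, by simp, by simpa [sigmaHat] using hv,
        by simp [foldCost, hv]⟩
    · simp [hv] at hne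
  | succ n ih =>
    intro t u hne
    set f : ℝ → EReal := fun vt => α (β (a t) (c t vt))
      (gHat rnd 𝒱 α β a c v (t + 1) n (rnd (u + a t * vt))) with hf
    have hgd : gHat rnd 𝒱 α β a c v t (n + 1) u = ⨅ vt ∈ 𝒱, f vt := rfl
    obtain ⟨v₀, hv₀mem, hv₀⟩ := Finset.exists_mem_eq_inf' h𝒱 f
    have hinf : gHat rnd 𝒱 α β a c v t (n + 1) u = f v₀ := by
      rw [hgd, ← Finset.inf_eq_iInf, ← Finset.inf'_eq_inf h𝒱 f, hv₀]
    have hnext : gHat rnd 𝒱 α β a c v (t + 1) n (rnd (u + a t * v₀)) ≠ ⊤ := by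
      intro htop
      apply hne
      rw [hinf, hf]
      simp [htop, hαTop]
    obtain ⟨w, hwmem, hwv, hwle⟩ := ih (t + 1) (rnd (u + a t * v₀)) hnext
    refine ⟨Function.update w t v₀, ?_, ?_, ?_⟩
    · intro i hi
      rcases eq_or_ne i t with rfl | hit
      · simpa using hv₀mem
      · rw [Function.update_of_ne hit]
        exact hwmem i (by simp [Finset.mem_Ico] at *; omega)
    · have hupd : ∀ i ∈ Finset.Ico (t + 1) (t + 1 + n),
          w i = Function.update w t v₀ i := by
        intro i hi
        rw [Function.update_of_ne (by simp [Finset.mem_Ico] at hi; omega)]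
      simp only [sigmaHat, Function.update_self]
      rw [← sigmaHat_congr rnd a n (t + 1) _ w _ hupd]
      exact hwv
    · have hupd : ∀ i ∈ Finset.Ico (t + 1) (t + 1 + n),
          w i = Function.update w t v₀ i := by
        intro i hi
        rw [Function.update_of_ne (by simp [Finset.mem_Ico] at hi; omega)]
      rw [hinf, hf]
      simp only [foldCost, Function.update_self]
      rw [← foldCost_congr α β a c n (t + 1) w _ hupd]
      exact hα₁ _ hwle

/-- The approximate recursion computes the constrained minimum of the fold over
all demand vectors in `𝒱` whose *rounded* partial sum meets the value
constraint (minimum over an empty feasible set being `∞ = ⊤`). -/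
theorem gHat_eq_min (rnd : ℝ → ℝ) (𝒱 : Finset ℝ) (h𝒱 : 𝒱.Nonempty)
    (α : EReal → EReal → EReal) (β : ℝ → EReal → EReal)
    (hα₁ : ∀ x, Monotone (α x)) (hα₂ : ∀ y, Monotone fun x => α x y)
    (hαTop : ∀ x, α x ⊤ = ⊤)
    (a : ℕ → ℝ) (ha : ∀ t, 0 ≤ a t) (c : ℕ → ℝ → EReal) (v : ℝ)
    (t n : ℕ) (u : ℝ) :
    gHat rnd 𝒱 α β a c v t n u =
      sInf {x : EReal | ∃ w : ℕ → ℝ,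
        (∀ i ∈ Finset.Ico t (t + n), w i ∈ 𝒱) ∧
        v ≤ sigmaHat rnd a w t n u ∧
        x = foldCost α β a c t n w} := by
  apply le_antisymm
  · apply le_sInf
    rintro x ⟨w, hwmem, hwv, rfl⟩
    exact gHat_le_foldCost rnd 𝒱 α β hα₁ a c v n t u w hwmem hwv
  · by_cases htop : gHat rnd 𝒱 α β a c v t n u = ⊤
    · rw [htop]; exact le_top
    · obtain ⟨w, hwmem, hwv, hwle⟩ :=
        gHat_attained rnd 𝒱 h𝒱 α β hα₁ hαTop a c v n t u htop
      exact le_trans (sInf_le ⟨w, hwmem, hwv, rfl⟩) hwle
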